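/- Let X be n-Hausdorff, Z an n-H-closed extension of X that is Hausdorff except for X, and f : n-κX → Z a continuous surjection with f(x) = x for x ∈ X. Then P = {f⁻¹(p) : p ∈ Z∖X} is a Hausdorff partition of n-σX ∖ X into compact sets closed in n-σX, each of which is Hausdorff-separated from every point of X. -/

import Mathlib

open Set Topology Function

universe u v

/-- A space is `n`-Hausdorff if any `n` distinct points admit open neighborhoods
with empty intersection. -/
def NHausdorff (X : Type u) [TopologicalSpace X] (n : ℕ) : Prop :=
  ∀ x : Fin n → X, Function.Injective x →
    ∃ U : Fin n → Set X, (∀ i, IsOpen (U i) ∧ x i ∈ U i) ∧ (⋂ i, U i) = (∅ : Set X)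

/-- An open filter on `X`: a nonempty family of nonempty open sets closed under
finite intersections and open supersets. -/
structure IsOpenFilter {X : Type u} [TopologicalSpace X] (F : Set (Set X)) : Prop where
  nonempty : F.Nonempty
  isOpen_mem : ∀ U ∈ F, IsOpen U
  nonempty_mem : ∀ U ∈ F, U.Nonempty
  inter_mem : ∀ U ∈ F, ∀ V ∈ F, U ∩ V ∈ F
  superset_mem : ∀ U ∈ F, ∀ V : Set X, IsOpen V → U ⊆ V → V ∈ F

/-- An open ultrafilter: a maximal open filter. -/
def IsOpenUltrafilter {X : Type u} [TopologicalSpace X] (F : Set (Set X)) : Prop :=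
  IsOpenFilter F ∧ ∀ G : Set (Set X), IsOpenFilter G → F ⊆ G → G = F

/-- The adherence of a family of sets: `⋂ {cl U : U ∈ F}`. -/
def adh {X : Type u} [TopologicalSpace X] (F : Set (Set X)) : Set X :=
  ⋂ U ∈ F, closure U

/-- `X` is `n`-H-closed: `X` is `n`-Hausdorff and closed in every `n`-Hausdorff space
in which it embeds. -/
def NHClosed (X : Type u) [TopologicalSpace X] (n : ℕ) : Prop :=
  NHausdorff X n ∧
    ∀ (Z : Type u) (_ : TopologicalSpace Z) (e : X → Z),
      NHausdorff Z n → IsEmbedding e → IsClosed (Set.range e)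

lemma univ_mem_of_isOpenFilter {X : Type u} [TopologicalSpace X] {F : Set (Set X)}
    (hF : IsOpenFilter F) : Set.univ ∈ F := by
  obtain ⟨U, hU⟩ := hF.nonempty
  exact hF.superset_mem U hU Set.univ isOpen_univ (Set.subset_univ U)

/-- The non-full open ultrafilters on `X`: those with fewer than `n-1` adherent points. -/
def NonFullUlt (X : Type u) [TopologicalSpace X] (n : ℕ) : Type u :=
  {F : Set (Set X) // IsOpenUltrafilter F ∧ (adh F).encard < (n - 1 : ℕ)}

/-- The points added to `X` to form `n-κX`: for each non-full open ultrafilter `U`,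
a set of `n - 1 - |aU|` new points. -/
def KPoints (X : Type u) [TopologicalSpace X] (n : ℕ) : Type u :=
  Σ F : NonFullUlt X n, Fin (n - 1 - (adh F.val).ncard)

/-- The underlying set of the Katětov-type extension `n-κX`. -/
def nKatetov (X : Type u) [TopologicalSpace X] (n : ℕ) : Type u :=
  X ⊕ KPoints X n

/-- The topology of `n-κX`: `V` is open iff `V ∩ X` is open in `X` and each added point
`p` (associated to the ultrafilter `p.1`) in `V` satisfies `V ∩ X ∈ p.1`. -/
def nKatetovTop (X : Type u) [TopologicalSpace X] (n : ℕ) :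
    TopologicalSpace (nKatetov X n) where
  IsOpen V := IsOpen (Sum.inl ⁻¹' V : Set X) ∧
    ∀ p : KPoints X n, Sum.inr p ∈ V → Sum.inl ⁻¹' V ∈ p.1.val
  isOpen_univ := by
    refine ⟨by exact isOpen_univ, fun p _ => ?_⟩
    exact univ_mem_of_isOpenFilter p.1.property.1.1
  isOpen_inter := by
    rintro s t ⟨hs1, hs2⟩ ⟨ht1, ht2⟩
    refine ⟨by exact hs1.inter ht1, fun p hp => ?_⟩
    exact p.1.property.1.1.inter_mem _ (hs2 p hp.1) _ (ht2 p hp.2)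
  isOpen_sUnion := by
    intro S hS
    have hop : IsOpen (Sum.inl ⁻¹' ⋃₀ S : Set X) := by
      rw [show (Sum.inl ⁻¹' ⋃₀ S : Set X) = ⋃ s ∈ S, Sum.inl ⁻¹' s from Set.preimage_sUnion]
      exact isOpen_biUnion fun s hs => (hS s hs).1
    refine ⟨hop, ?_⟩
    rintro p ⟨s, hsS, hps⟩
    exact p.1.property.1.1.superset_mem _ ((hS s hsS).2 p hps) _ hop
      (fun x hx => ⟨s, hsS, hx⟩)

/-- For `U` open in `Y`, the set `o(U ∩ X) = {p ∈ Y : U ∩ X ∈ O^p}`, where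
`O^p = {V ∩ X : p ∈ V ∈ τ(Y)}`. -/
def oSet {Y : Type u} [TopologicalSpace Y] (X : Set Y) (U : Set Y) : Set Y :=
  {p | ∃ V : Set Y, IsOpen V ∧ p ∈ V ∧ V ∩ X = U ∩ X}

/-- The strict extension topology on `Y` (relative to the dense subset `X`),
with base `{oU : U open in X}`. -/
def strictTop (Y : Type u) [TopologicalSpace Y] (X : Set Y) : TopologicalSpace Y :=
  TopologicalSpace.generateFrom {S | ∃ U : Set Y, IsOpen U ∧ S = oSet X U}

/-- The simple extension topology on `Y` (relative to the dense subset `X`),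
generated by the sets `{p} ∪ U` for `U ∈ O^p`. -/
def simpleTop (Y : Type u) [TopologicalSpace Y] (X : Set Y) : TopologicalSpace Y :=
  TopologicalSpace.generateFrom
    {S | ∃ (p : Y) (V : Set Y), IsOpen V ∧ p ∈ V ∧ S = insert p (V ∩ X)}

/-- `Z` is Hausdorff except for `X`: every point of `Z ∖ X` can be separated from every
other point of `Z` by disjoint open sets. -/
def HausdorffExceptFor (Z : Type u) [TopologicalSpace Z] (X : Set Z) : Prop :=
  ∀ p ∉ X, ∀ q : Z, q ≠ p →
    ∃ U V : Set Z, IsOpen U ∧ IsOpen V ∧ p ∈ U ∧ q ∈ V ∧ U ∩ V = ∅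

section AuxLemmas

open TopologicalSpace

variable {X : Type u} [TopologicalSpace X] {n : ℕ}

lemma mem_adh {F : Set (Set X)} {x : X} : x ∈ adh F ↔ ∀ U ∈ F, x ∈ closure U := by
  simp [adh]

lemma kOpen_def {V : Set (nKatetov X n)} :
    IsOpen[nKatetovTop X n] V ↔
      (IsOpen (Sum.inl ⁻¹' V : Set X) ∧
        ∀ p : KPoints X n, Sum.inr p ∈ V → Sum.inl ⁻¹' V ∈ p.1.val) :=
  Iff.rfl

lemma dense_inl {V : Set (nKatetov X n)} (hV : IsOpen[nKatetovTop X n] V)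
    (hne : V.Nonempty) : ∃ x : X, Sum.inl x ∈ V := by
  obtain ⟨z, hz⟩ := hne
  cases z with
  | inl x => exact ⟨x, hz⟩
  | inr q =>
    obtain ⟨x, hx⟩ := q.1.2.1.1.nonempty_mem _ ((kOpen_def.mp hV).2 q hz)
    exact ⟨x, hx⟩

lemma isOpenUltrafilter_dichotomy {F : Set (Set X)} (hF : IsOpenUltrafilter F)
    {U : Set X} (hU : IsOpen U) : U ∈ F ∨ (closure U)ᶜ ∈ F := by
  by_cases h : ∀ V ∈ F, (V ∩ U).Nonempty
  · left
    set G : Set (Set X) := {W | IsOpen W ∧ ∃ V ∈ F, V ∩ U ⊆ W} with hG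
    have hGF : IsOpenFilter G := by
      constructor
      · exact ⟨U, hU, Set.univ, univ_mem_of_isOpenFilter hF.1, fun x hx => hx.2⟩
      · exact fun W hW => hW.1
      · rintro W ⟨hWo, V, hV, hVW⟩
        exact (h V hV).mono hVW
      · rintro W₁ ⟨h1, V₁, hV₁, hs1⟩ W₂ ⟨h2, V₂, hV₂, hs2⟩
        exact ⟨h1.inter h2, V₁ ∩ V₂, hF.1.inter_mem _ hV₁ _ hV₂,
          fun x hx => ⟨hs1 ⟨hx.1.1, hx.2⟩, hs2 ⟨hx.1.2, hx.2⟩⟩⟩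
      · rintro W ⟨h1, V, hV, hs⟩ W' hW' hWW'
        exact ⟨hW', V, hV, hs.trans hWW'⟩
    have hsub : F ⊆ G := fun V hV =>
      ⟨hF.1.isOpen_mem V hV, V, hV, fun x hx => hx.1⟩
    have hGFeq := hF.2 G hGF hsub
    rw [← hGFeq]
    exact ⟨hU, Set.univ, univ_mem_of_isOpenFilter hF.1, fun x hx => hx.2⟩
  · right
    push_neg at h
    obtain ⟨V, hV, hVU⟩ := h
    have hVo := hF.1.isOpen_mem V hV
    have hsub : V ⊆ (closure U)ᶜ := by
      intro x hx hcx
      obtain ⟨y, hy1, hy2⟩ := mem_closure_iff.mp hcx V hVo hx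
      exact absurd hVU (Set.nonempty_iff_ne_empty.mp ⟨y, hy1, hy2⟩)
    exact hF.1.superset_mem V hV _ isClosed_closure.isOpen_compl hsub

lemma isOpenUltrafilter_of_dichotomy {F : Set (Set X)} (hF : IsOpenFilter F)
    (h : ∀ U : Set X, IsOpen U → U ∈ F ∨ (closure U)ᶜ ∈ F) :
    IsOpenUltrafilter F := by
  refine ⟨hF, fun G hG hFG => ?_⟩
  apply Set.Subset.antisymm _ hFG
  intro U hUG
  rcases h U (hG.isOpen_mem U hUG) with h1 | h2
  · exact h1
  · exfalso
    have h3 : U ∩ (closure U)ᶜ ∈ G := hG.inter_mem U hUG _ (hFG h2)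
    obtain ⟨x, hx1, hx2⟩ := hG.nonempty_mem _ h3
    exact hx2 (subset_closure hx1)

/-- The one-point extension of `Z` by an open filter `H`. -/
def extTop {Z : Type u} [TopologicalSpace Z] (H : Set (Set Z)) (hH : IsOpenFilter H) :
    TopologicalSpace (Option Z) where
  IsOpen W := IsOpen (some ⁻¹' W : Set Z) ∧ (none ∈ W → some ⁻¹' W ∈ H)
  isOpen_univ := ⟨by simpa using isOpen_univ,
    fun _ => by simpa using univ_mem_of_isOpenFilter hH⟩
  isOpen_inter s t hs ht := by
    refine ⟨by rw [Set.preimage_inter]; exact hs.1.inter ht.1, fun hn => ?_⟩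
    rw [Set.preimage_inter]
    exact hH.inter_mem _ (hs.2 hn.1) _ (ht.2 hn.2)
  isOpen_sUnion S hS := by
    have hop : IsOpen (some ⁻¹' ⋃₀ S : Set Z) := by
      rw [Set.preimage_sUnion]; exact isOpen_biUnion fun s hs => (hS s hs).1
    refine ⟨hop, ?_⟩
    rintro ⟨s, hsS, hns⟩
    exact hH.superset_mem _ ((hS s hsS).2 hns) _ hop fun x hx => ⟨s, hsS, hx⟩

lemma extTop_isOpen_iff {Z : Type u} [TopologicalSpace Z] {H : Set (Set Z)}
    {hH : IsOpenFilter H} {W : Set (Option Z)} :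
    IsOpen[extTop H hH] W ↔
      (IsOpen (some ⁻¹' W : Set Z) ∧ (none ∈ W → some ⁻¹' W ∈ H)) :=
  Iff.rfl

lemma extTop_isOpen_image {Z : Type u} [TopologicalSpace Z] {H : Set (Set Z)}
    {hH : IsOpenFilter H} {U : Set Z} (hU : IsOpen U) :
    IsOpen[extTop H hH] (some '' U) := by
  rw [extTop_isOpen_iff]
  refine ⟨by rw [Set.preimage_image_eq U (Option.some_injective Z)]; exact hU, ?_⟩
  rintro ⟨z, _, hz⟩
  exact absurd hz (Option.some_ne_none z)

lemma extTop_isOpen_insert {Z : Type u} [TopologicalSpace Z] {H : Set (Set Z)}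
    {hH : IsOpenFilter H} {V : Set Z} (hV : V ∈ H) :
    IsOpen[extTop H hH] (insert none (some '' V)) := by
  rw [extTop_isOpen_iff]
  have hpre : (some ⁻¹' insert none (some '' V) : Set Z) = V := by
    ext z
    simp [Option.some_ne_none, (Option.some_injective Z).eq_iff]
  rw [hpre]
  exact ⟨hH.isOpen_mem V hV, fun _ => hV⟩

lemma extTop_nHausdorff {Z : Type u} [TopologicalSpace Z] {n : ℕ} (hn : 2 ≤ n)
    (hZn : NHausdorff Z n) {H : Set (Set Z)} (hH : IsOpenFilter H)
    (hcard : (adh H).encard < ((n - 1 : ℕ) : ℕ∞)) :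
    @NHausdorff (Option Z) (extTop H hH) n := by
  intro y hy
  by_cases hnone : ∃ i, y i = none
  · obtain ⟨i₀, hi₀⟩ := hnone
    by_cases hsep : ∃ i, i ≠ i₀ ∧ ∃ z : Z, y i = some z ∧ z ∉ adh H
    · obtain ⟨i₁, hi₁0, z, hz, hzadh⟩ := hsep
      have hex : ∃ V ∈ H, z ∉ closure V := by
        by_contra hc
        push_neg at hc
        exact hzadh (mem_adh.mpr hc)
      obtain ⟨V, hVH, hzV⟩ := hex
      refine ⟨fun i => if i = i₀ then insert none (some '' V) else
        if i = i₁ then some '' (closure V)ᶜ else Set.univ, ?_, ?_⟩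
      · intro i
        by_cases h0 : i = i₀
        · subst h0
          simp only [if_pos rfl]
          exact ⟨extTop_isOpen_insert hVH, hi₀ ▸ Set.mem_insert _ _⟩
        · by_cases h1 : i = i₁
          · subst h1
            simp only [if_neg h0, if_pos rfl]
            exact ⟨extTop_isOpen_image isClosed_closure.isOpen_compl,
              ⟨z, hzV, hz.symm⟩⟩
          · simp only [if_neg h0, if_neg h1]
            exact ⟨@isOpen_univ _ (extTop H hH), Set.mem_univ _⟩
      · ext w
        simp only [Set.mem_iInter, Set.mem_empty_iff_false, iff_false]
        intro hw
        have hw0 := hw i₀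
        have hw1 := hw i₁
        rw [if_pos rfl] at hw0
        rw [if_neg hi₁0, if_pos rfl] at hw1
        obtain ⟨z', hz', hz'eq⟩ := hw1
        rw [← hz'eq] at hw0
        rcases hw0 with h | h
        · exact Option.some_ne_none z' h
        · obtain ⟨z'', hz'', heq⟩ := h
          rw [(Option.some_injective Z).eq_iff] at heq
          exact hz' (subset_closure (heq ▸ hz''))
    · exfalso
      push_neg at hsep
      classical
      obtain ⟨i₁, hi₁⟩ : ∃ i₁ : Fin n, i₁ ≠ i₀ := by
        refine ⟨if h : (i₀ : ℕ) = 0 then ⟨1, by omega⟩ else ⟨0, by omega⟩, ?_⟩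
        intro hc
        by_cases h : (i₀ : ℕ) = 0
        · rw [dif_pos h] at hc
          have hcc := congrArg Fin.val hc
          simp [h] at hcc
        · rw [dif_neg h] at hc
          have hcc := congrArg Fin.val hc
          simp at hcc
          exact h hcc.symm
      have hysome : ∀ i : Fin n, i ≠ i₀ → ∃ z : Z, y i = some z := by
        intro i hi
        cases hyi : y i with
        | none => exact absurd (hy (hyi.trans hi₀.symm)) hi
        | some z => exact ⟨z, rfl⟩
      obtain ⟨zdef, _⟩ := hysome i₁ hi₁
      set w : Fin n → Z := fun i => (y i).getD zdef with hw
      have hwmem : ∀ i : Fin n, i ≠ i₀ → w i ∈ adh H ∧ y i = some (w i) := by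
        intro i hi
        obtain ⟨z, hz⟩ := hysome i hi
        have hwi : w i = z := by rw [hw]; simp [hz]
        rw [hwi]
        exact ⟨hsep i hi z hz, hz⟩
      set S : Finset Z := (Finset.univ.erase i₀).image w with hS
      have hinjOn : Set.InjOn w (Finset.univ.erase i₀ : Finset (Fin n)) := by
        intro i hi j hj hij
        have hi' : i ≠ i₀ := (Finset.mem_erase.mp (Finset.mem_coe.mp hi)).1
        have hj' : j ≠ i₀ := (Finset.mem_erase.mp (Finset.mem_coe.mp hj)).1
        apply hy
        rw [(hwmem i hi').2, (hwmem j hj').2, hij]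
      have hcardS : S.card = n - 1 := by
        rw [hS, Finset.card_image_of_injOn hinjOn,
          Finset.card_erase_of_mem (Finset.mem_univ _), Finset.card_univ,
          Fintype.card_fin]
      have hsub : (↑S : Set Z) ⊆ adh H := by
        intro v hv
        simp only [hS, Finset.coe_image, Set.mem_image, Finset.mem_coe,
          Finset.mem_erase] at hv
        obtain ⟨i, ⟨hi, _⟩, rfl⟩ := hv
        exact (hwmem i hi).1
      have hle : ((n - 1 : ℕ) : ℕ∞) ≤ (adh H).encard := by
        rw [← hcardS, ← Set.encard_coe_eq_coe_finsetCard]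
        exact Set.encard_mono hsub
      exact absurd hcard (not_lt.mpr hle)
  · push_neg at hnone
    have hz : ∀ i, ∃ z : Z, y i = some z := by
      intro i
      cases hyi : y i with
      | none => exact absurd hyi (hnone i)
      | some z => exact ⟨z, rfl⟩
    choose z hz using hz
    have hzinj : Function.Injective z := by
      intro i j hij
      apply hy
      rw [hz i, hz j, hij]
    obtain ⟨U, hU, hInt⟩ := hZn z hzinj
    refine ⟨fun i => some '' U i, fun i => ⟨extTop_isOpen_image (hU i).1,
      hz i ▸ ⟨z i, (hU i).2, rfl⟩⟩, ?_⟩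
    ext v
    simp only [Set.mem_iInter, Set.mem_empty_iff_false, iff_false]
    intro hv
    have h0 : (0 : ℕ) < n := by omega
    obtain ⟨z0, hz0, hz0eq⟩ := hv ⟨0, h0⟩
    have hall : z0 ∈ ⋂ i, U i := by
      apply Set.mem_iInter.mpr
      intro i
      obtain ⟨z1, hz1, hz1eq⟩ := hv i
      rwa [← (Option.some_injective Z) (hz1eq.trans hz0eq.symm)]
    rw [hInt] at hall
    exact hall

end AuxLemmas
section AuxLemmas2

open TopologicalSpace

lemma extTop_embedding {Z : Type u} [TopologicalSpace Z] {H : Set (Set Z)}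
    (hH : IsOpenFilter H) :
    @IsEmbedding Z (Option Z) _ (extTop H hH) some := by
  letI : TopologicalSpace (Option Z) := extTop H hH
  refine ⟨⟨?_⟩, Option.some_injective Z⟩
  refine TopologicalSpace.ext_iff.mpr fun s => ?_
  constructor
  · intro hs
    exact (@isOpen_induced_iff Z (Option Z) (extTop H hH) s some).mpr
      ⟨some '' s, extTop_isOpen_image hs,
        Set.preimage_image_eq s (Option.some_injective Z)⟩
  · intro hs
    obtain ⟨W, hW, rfl⟩ := (@isOpen_induced_iff Z (Option Z) (extTop H hH) s some).mp hs
    exact hW.1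

lemma key_not_mem_range {X Z : Type u} [TopologicalSpace X] [TopologicalSpace Z]
    {n : ℕ} (hn : 2 ≤ n)
    {e : X → Z} (he : IsEmbedding e) (hd : Dense (Set.range e))
    (hZ : NHClosed Z n) (hZH : HausdorffExceptFor Z (Set.range e))
    {f : nKatetov X n → Z} (hf : Continuous[nKatetovTop X n, _] f)
    (hfx : ∀ x : X, f (Sum.inl x) = e x)
    (q : KPoints X n) : f (Sum.inr q) ∉ Set.range e := by
  rintro ⟨x, hx⟩
  set G := q.1.val with hGdef
  have hGF : IsOpenFilter G := q.1.2.1.1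
  have hA : ∀ U : Set Z, IsOpen U → e x ∈ U → e ⁻¹' U ∈ G := by
    intro U hU hxU
    have h1 : IsOpen[nKatetovTop X n] (f ⁻¹' U) := (continuous_def.mp hf) U hU
    have h2 : Sum.inr q ∈ f ⁻¹' U := by
      show f (Sum.inr q) ∈ U
      rw [← hx]
      exact hxU
    have h3 := (kOpen_def.mp h1).2 q h2
    have h4 : Sum.inl ⁻¹' (f ⁻¹' U) = e ⁻¹' U := by
      ext y
      exact iff_of_eq (congrArg (· ∈ U) (hfx y))
    rw [← h4]; exact h3
  set H : Set (Set Z) := {U | IsOpen U ∧ e ⁻¹' U ∈ G} with hHdef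
  have hHF : IsOpenFilter H := by
    constructor
    · exact ⟨Set.univ, isOpen_univ, by simpa using univ_mem_of_isOpenFilter hGF⟩
    · exact fun U hU => hU.1
    · rintro U ⟨hUo, hUG⟩
      obtain ⟨y, hy⟩ := hGF.nonempty_mem _ hUG
      exact ⟨e y, hy⟩
    · rintro U ⟨h1, h2⟩ V ⟨h3, h4⟩
      exact ⟨h1.inter h3, by
        rw [Set.preimage_inter]
        exact hGF.inter_mem _ h2 _ h4⟩
    · rintro U ⟨h1, h2⟩ V hVo hUV
      exact ⟨hVo, hGF.superset_mem _ h2 _ (hVo.preimage he.continuous)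
        (Set.preimage_mono hUV)⟩
  have hadhH : adh H ⊆ e '' adh G := by
    intro z hz
    have hz' : ∀ V ∈ H, z ∈ closure V := mem_adh.mp hz
    by_cases hzX : z ∈ Set.range e
    · obtain ⟨x', rfl⟩ := hzX
      refine ⟨x', mem_adh.mpr fun W hW => ?_, rfl⟩
      obtain ⟨V₀, hV₀o, hV₀W⟩ := he.toIsInducing.isOpen_iff.mp (hGF.isOpen_mem W hW)
      have hV₀H : V₀ ∈ H := ⟨hV₀o, by rw [hV₀W]; exact hW⟩
      have hcl : e x' ∈ closure V₀ := hz' V₀ hV₀H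
      have h5 : closure (V₀ ∩ Set.range e) = closure V₀ := by
        apply Set.Subset.antisymm (closure_mono Set.inter_subset_left)
        intro v hv
        rw [mem_closure_iff] at hv ⊢
        intro o ho hvo
        obtain ⟨u, hu1, hu2⟩ := hv o ho hvo
        obtain ⟨y, hy1, hy2⟩ := hd.exists_mem_open (ho.inter hV₀o) ⟨u, hu1, hu2⟩
        exact ⟨y, hy2.1, hy2.2, hy1⟩
      have h6 : closure W = e ⁻¹' closure (e '' W) :=
        he.closure_eq_preimage_closure_image W
      rw [h6]
      show e x' ∈ closure (e '' W)
      have h7 : e '' W = V₀ ∩ Set.range e := by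
        rw [← hV₀W, Set.image_preimage_eq_inter_range]
      rw [h7, h5]
      exact hcl
    · exfalso
      have hne : e x ≠ z := fun h => hzX (h ▸ ⟨x, rfl⟩)
      obtain ⟨U, V, hUo, hVo, hzU, hxV, hUV⟩ := hZH z hzX (e x) hne
      have hVH : V ∈ H := ⟨hVo, hA V hVo hxV⟩
      obtain ⟨v, hv1, hv2⟩ := mem_closure_iff.mp (hz' V hVH) U hUo hzU
      exact Set.eq_empty_iff_forall_notMem.mp hUV v ⟨hv1, hv2⟩
  have hcard : (adh H).encard < ((n - 1 : ℕ) : ℕ∞) := by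
    calc (adh H).encard ≤ (e '' adh G).encard := Set.encard_mono hadhH
      _ = (adh G).encard := he.injective.encard_image _
      _ < _ := q.1.2.2
  have hclosed := hZ.2 (Option Z) (extTop H hHF) some
    (extTop_nHausdorff hn hZ.1 hHF hcard) (extTop_embedding hHF)
  have h8 : (Set.range (some : Z → Option Z))ᶜ = {none} := by
    ext w
    cases w <;> simp
  have h9 : IsOpen[extTop H hHF] {(none : Option Z)} := by
    rw [← h8]
    exact hclosed.isOpen_compl
  have h10 : (some ⁻¹' {(none : Option Z)} : Set Z) ∈ H := (extTop_isOpen_iff.mp h9).2 rfl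
  have h11 : (some ⁻¹' {(none : Option Z)} : Set Z) = ∅ := by
    ext z
    simp
  rw [h11] at h10
  exact Set.not_nonempty_empty (hHF.nonempty_mem _ h10)

lemma mem_oSet_self {Y : Type u} [TopologicalSpace Y] {X : Set Y} {U : Set Y}
    (hU : IsOpen U) {z : Y} (hz : z ∈ U) : z ∈ oSet X U := ⟨U, hU, hz, rfl⟩

lemma oSet_isOpen_strict {Y : Type u} [TopologicalSpace Y] (X : Set Y) {U : Set Y}
    (hU : IsOpen U) : IsOpen[strictTop Y X] (oSet X U) :=
  TopologicalSpace.GenerateOpen.basic _ ⟨U, hU, rfl⟩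

lemma oSet_preimage_disjoint {X Z : Type u} [TopologicalSpace X] [TopologicalSpace Z]
    {n : ℕ} {e : X → Z} {f : nKatetov X n → Z} (hfx : ∀ x : X, f (Sum.inl x) = e x)
    {U V : Set Z} (hUV : U ∩ V = ∅) :
    @oSet (nKatetov X n) (nKatetovTop X n) (Set.range Sum.inl) (f ⁻¹' U) ∩
      @oSet (nKatetov X n) (nKatetovTop X n) (Set.range Sum.inl) (f ⁻¹' V) = ∅ := by
  letI : TopologicalSpace (nKatetov X n) := nKatetovTop X n
  ext z
  simp only [Set.mem_inter_iff, Set.mem_empty_iff_false, iff_false, not_and]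
  rintro ⟨V₁, hV₁o, hzV₁, htr1⟩ ⟨V₂, hV₂o, hzV₂, htr2⟩
  obtain ⟨x, hx⟩ := dense_inl (X := X) (n := n) (hV₁o.inter hV₂o) ⟨z, hzV₁, hzV₂⟩
  have h1 : Sum.inl x ∈ f ⁻¹' U ∩ Set.range Sum.inl := by
    rw [← htr1]
    exact ⟨hx.1, ⟨x, rfl⟩⟩
  have h2 : Sum.inl x ∈ f ⁻¹' V ∩ Set.range Sum.inl := by
    rw [← htr2]
    exact ⟨hx.2, ⟨x, rfl⟩⟩
  have : e x ∈ U ∩ V := by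
    rw [← hfx x]
    exact ⟨h1.1, h2.1⟩
  rw [hUV] at this
  exact this

end AuxLemmas2
theorem stmt19 {X Z : Type u} [TopologicalSpace X] [TopologicalSpace Z]
    (n : ℕ) (hn : 2 ≤ n) (hX : NHausdorff X n)
    (e : X → Z) (he : IsEmbedding e) (hd : Dense (Set.range e))
    (hZ : NHClosed Z n) (hZH : HausdorffExceptFor Z (Set.range e))
    (f : nKatetov X n → Z) (hf : Continuous[nKatetovTop X n, _] f)
    (hfs : Function.Surjective f) (hfx : ∀ x : X, f (Sum.inl x) = e x) :
    let σ : TopologicalSpace (nKatetov X n) :=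
      @strictTop (nKatetov X n) (nKatetovTop X n) (Set.range Sum.inl)
    -- each member of the partition is a nonempty compact subset of `n-σX ∖ X`,
    -- closed in `n-σX`
    (∀ p : Z, p ∉ Set.range e →
      IsClosed[σ] (f ⁻¹' {p}) ∧ @IsCompact _ σ (f ⁻¹' {p}) ∧ (f ⁻¹' {p}).Nonempty ∧
        f ⁻¹' {p} ⊆ (Set.range (Sum.inl : X → nKatetov X n))ᶜ) ∧
    -- the members partition `n-σX ∖ X`
    ((Set.range (Sum.inl : X → nKatetov X n))ᶜ =
      ⋃ p ∈ (Set.range e)ᶜ, f ⁻¹' {p}) ∧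
    -- the partition is Hausdorff
    (∀ p q : Z, p ∉ Set.range e → q ∉ Set.range e → p ≠ q →
      ∃ U V : Set (nKatetov X n), IsOpen[σ] U ∧ IsOpen[σ] V ∧
        f ⁻¹' {p} ⊆ U ∧ f ⁻¹' {q} ⊆ V ∧ U ∩ V = ∅) ∧
    -- each member is Hausdorff-separated from every point of `X`
    (∀ p : Z, p ∉ Set.range e → ∀ x : X,
      ∃ U V : Set (nKatetov X n), IsOpen[σ] U ∧ IsOpen[σ] V ∧
        f ⁻¹' {p} ⊆ U ∧ Sum.inl x ∈ V ∧ U ∩ V = ∅) := by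
  intro σ
  classical
  letI : TopologicalSpace (nKatetov X n) := nKatetovTop X n
  letI : TopologicalSpace (X ⊕ KPoints X n) := nKatetovTop X n
  have hkey : ∀ q : KPoints X n, f (Sum.inr q) ∉ Set.range e :=
    key_not_mem_range hn he hd hZ hZH hf hfx
  have hpre : ∀ {U : Set Z}, IsOpen U → IsOpen (f ⁻¹' U) :=
    fun hU => (continuous_def.mp hf) _ hU
  have hinr : ∀ {p : Z}, p ∉ Set.range e → ∀ {z : nKatetov X n}, f z = p →
      ∃ q : KPoints X n, z = Sum.inr q := by
    intro p hp z hz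
    cases z with
    | inl x => exact absurd ⟨x, (hfx x).symm.trans hz⟩ hp
    | inr q => exact ⟨q, rfl⟩
  have hdisj : ∀ {U V : Set Z}, U ∩ V = ∅ →
      oSet (Set.range (Sum.inl : X → nKatetov X n)) (f ⁻¹' U) ∩ oSet (Set.range (Sum.inl : X → nKatetov X n)) (f ⁻¹' V) = ∅ :=
    fun h => oSet_preimage_disjoint hfx h
  have hsubO : ∀ {U : Set Z}, IsOpen U → ∀ {p : Z}, p ∈ U →
      f ⁻¹' {p} ⊆ oSet (Set.range (Sum.inl : X → nKatetov X n)) (f ⁻¹' U) := by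
    intro U hU p hpU z hz
    have hz' : f z = p := hz
    exact mem_oSet_self (hpre hU) (show f z ∈ U by rw [hz']; exact hpU)
  -- closedness
  have hclosed : ∀ p : Z, p ∉ Set.range e → IsClosed[σ] (f ⁻¹' {p}) := by
    intro p hp
    refine @IsClosed.mk _ σ _ ?_
    have hex : ∀ z : {z : nKatetov X n // f z ≠ p}, ∃ O : Set (nKatetov X n),
        IsOpen[σ] O ∧ ↑z ∈ O ∧ O ∩ f ⁻¹' {p} = ∅ := by
      rintro ⟨z, hz⟩
      obtain ⟨U, V, hUo, hVo, hpU, hzV, hUV⟩ := hZH p hp (f z) hz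
      refine ⟨oSet (Set.range (Sum.inl : X → nKatetov X n)) (f ⁻¹' V), oSet_isOpen_strict _ (hpre hVo),
        mem_oSet_self (hpre hVo) hzV, ?_⟩
      apply Set.eq_empty_iff_forall_notMem.mpr
      rintro w ⟨hw1, hw2⟩
      have hw3 : w ∈ oSet (Set.range (Sum.inl : X → nKatetov X n)) (f ⁻¹' U) := hsubO hUo hpU hw2
      exact Set.eq_empty_iff_forall_notMem.mp (hdisj hUV) w ⟨hw3, hw1⟩
    choose O hOopen hOmem hOdisj using hex
    have hcompl : (f ⁻¹' {p})ᶜ = ⋃ z : {z : nKatetov X n // f z ≠ p}, O z := by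
      ext w
      simp only [Set.mem_compl_iff, Set.mem_preimage, Set.mem_singleton_iff,
        Set.mem_iUnion]
      constructor
      · intro hw
        exact ⟨⟨w, hw⟩, hOmem _⟩
      · rintro ⟨z, hzO⟩ hw
        exact Set.eq_empty_iff_forall_notMem.mp (hOdisj z) w ⟨hzO, hw⟩
    rw [hcompl]
    exact @isOpen_iUnion _ _ σ _ hOopen
  -- compactness
  have hcpt : ∀ p : Z, p ∉ Set.range e → @IsCompact _ σ (f ⁻¹' {p}) := by
    intro p hp
    rw [@isCompact_iff_ultrafilter_le_nhds _ σ]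
    intro 𝒢 h𝒢
    have hPmem : f ⁻¹' {p} ∈ 𝒢 := Filter.le_principal_iff.mp h𝒢
    set okset : Set X → Set (nKatetov X n) :=
      fun U => {w | ∃ q : KPoints X n, w = Sum.inr q ∧ U ∈ q.1.val} with hokset
    have hok_oSet : ∀ {W : Set (nKatetov X n)}, IsOpen W →
        okset (Sum.inl ⁻¹' W) ⊆ oSet (Set.range (Sum.inl : X → nKatetov X n)) W := by
      intro W hW w hw
      obtain ⟨q, rfl, hq⟩ := hw
      have hpre' : Sum.inl ⁻¹' (Sum.inl '' (Sum.inl ⁻¹' W) ∪ {Sum.inr q})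
          = Sum.inl ⁻¹' W := by
        ext x
        simp
      refine ⟨Sum.inl '' (Sum.inl ⁻¹' W) ∪ {Sum.inr q}, ?_, Or.inr rfl, ?_⟩
      · refine kOpen_def.mpr ⟨(congrArg IsOpen hpre').mpr (kOpen_def.mp hW).1, ?_⟩
        intro q' hq'
        rcases hq' with h | h
        · obtain ⟨x, _, hx⟩ := h
          exact absurd hx (by simp)
        · have hqq : q' = q := Sum.inr_injective (Set.mem_singleton_iff.mp h)
          have hq2 := (congrArg (fun s => s ∈ q.1.val) hpre').mpr hq
          subst hqq
          exact hq2
      · ext y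
        constructor
        · rintro ⟨h1 | h2, hy2⟩
          · obtain ⟨x, hx1, rfl⟩ := h1
            exact ⟨hx1, hy2⟩
          · obtain ⟨x, hx⟩ := hy2
            have h2 : y = Sum.inr q := h2
            exact absurd (hx.trans h2) (by simp)
        · rintro ⟨h1, x, rfl⟩
          exact ⟨Or.inl ⟨x, h1, rfl⟩, x, rfl⟩
    set 𝒰 : Set (Set X) := {U | IsOpen U ∧ okset U ∈ 𝒢} with h𝒰
    have hcover : ∀ {U : Set X}, (∀ q : KPoints X n, U ∈ q.1.val) → okset U ∈ 𝒢 := by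
      intro U hall
      refine Filter.mem_of_superset hPmem ?_
      intro w hw
      obtain ⟨q, rfl⟩ := hinr hp hw
      exact ⟨q, rfl, hall q⟩
    have h𝒰F : IsOpenFilter 𝒰 := by
      constructor
      · exact ⟨Set.univ, isOpen_univ, hcover fun q => univ_mem_of_isOpenFilter q.1.2.1.1⟩
      · exact fun U hU => hU.1
      · rintro U ⟨hUo, hUG⟩
        obtain ⟨w, q, rfl, hq⟩ := Filter.nonempty_of_mem hUG
        exact q.1.2.1.1.nonempty_mem _ hq
      · rintro U ⟨h1, h2⟩ V ⟨h3, h4⟩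
        refine ⟨h1.inter h3, ?_⟩
        refine Filter.mem_of_superset (Filter.inter_mem h2 h4) ?_
        rintro w ⟨⟨q, rfl, hq⟩, ⟨q', heq, hq'⟩⟩
        obtain rfl := Sum.inr_injective heq
        exact ⟨q, rfl, q.1.2.1.1.inter_mem _ hq _ hq'⟩
      · rintro U ⟨h1, h2⟩ V hVo hUV
        refine ⟨hVo, Filter.mem_of_superset h2 ?_⟩
        rintro w ⟨q, rfl, hq⟩
        exact ⟨q, rfl, q.1.2.1.1.superset_mem _ hq _ hVo hUV⟩
    have h𝒰ult : IsOpenUltrafilter 𝒰 := by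
      apply isOpenUltrafilter_of_dichotomy h𝒰F
      intro U hU
      have hcup : f ⁻¹' {p} ⊆ okset U ∪ okset (closure U)ᶜ := by
        intro w hw
        obtain ⟨q, rfl⟩ := hinr hp hw
        rcases isOpenUltrafilter_dichotomy q.1.2.1 hU with h | h
        · exact Or.inl ⟨q, rfl, h⟩
        · exact Or.inr ⟨q, rfl, h⟩
      rcases Ultrafilter.union_mem_iff.mp (Filter.mem_of_superset hPmem hcup) with h | h
      · exact Or.inl ⟨hU, h⟩
      · exact Or.inr ⟨isClosed_closure.isOpen_compl, h⟩
    have hUmem : ∀ {U : Set Z}, IsOpen U → p ∈ U → Sum.inl ⁻¹' (f ⁻¹' U) ∈ 𝒰 := by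
      intro U hUo hpU
      refine ⟨(kOpen_def.mp (hpre hUo)).1, Filter.mem_of_superset hPmem ?_⟩
      intro w hw
      obtain ⟨q, rfl⟩ := hinr hp hw
      have hwp : f (Sum.inr q) = p := hw
      have hinU : Sum.inr q ∈ f ⁻¹' U := by
        show f (Sum.inr q) ∈ U
        rw [hwp]
        exact hpU
      exact ⟨q, rfl, (kOpen_def.mp (hpre hUo)).2 q hinU⟩
    have hadh : adh 𝒰 = ∅ := by
      by_contra hne
      obtain ⟨x, hx⟩ := Set.nonempty_iff_ne_empty.mpr hne
      have hexp : e x ≠ p := fun h => hp ⟨x, h⟩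
      obtain ⟨U, V, hUo, hVo, hpU, hxV, hUV⟩ := hZH p hp (e x) hexp
      have hU𝒰 : Sum.inl ⁻¹' (f ⁻¹' U) ∈ 𝒰 := hUmem hUo hpU
      have hxcl : x ∈ closure (Sum.inl ⁻¹' (f ⁻¹' U)) := mem_adh.mp hx _ hU𝒰
      obtain ⟨y, hy1, hy2⟩ := mem_closure_iff.mp hxcl (e ⁻¹' V)
        (hVo.preimage he.continuous) hxV
      have hyU : e y ∈ U := by rw [← hfx y]; exact hy2
      have : e y ∈ U ∩ V := ⟨hyU, hy1⟩
      rw [hUV] at this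
      exact this
    have hcard𝒰 : (adh 𝒰).encard < ((n - 1 : ℕ) : ℕ∞) := by
      rw [hadh, Set.encard_empty]
      exact_mod_cast (show 0 < n - 1 by omega)
    have hidx : 0 < n - 1 - (adh 𝒰).ncard := by
      rw [hadh, Set.ncard_empty]
      omega
    refine ⟨Sum.inr ⟨⟨𝒰, h𝒰ult, hcard𝒰⟩, ⟨0, hidx⟩⟩, ?_, ?_⟩
    · -- membership : f (inr qstar) = p
      simp only [Set.mem_preimage, Set.mem_singleton_iff]
      by_contra hne'
      obtain ⟨U, V, hUo, hVo, hpU, hqV, hUV⟩ :=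
        hZH p hp (f (Sum.inr ⟨⟨𝒰, h𝒰ult, hcard𝒰⟩, ⟨0, hidx⟩⟩)) hne'
      have h1 : Sum.inl ⁻¹' (f ⁻¹' V) ∈ 𝒰 :=
        (kOpen_def.mp (hpre hVo)).2 ⟨⟨𝒰, h𝒰ult, hcard𝒰⟩, ⟨0, hidx⟩⟩ hqV
      have h2 : okset (Sum.inl ⁻¹' (f ⁻¹' V)) ∈ 𝒢 := h1.2
      obtain ⟨w, hw1, hw2⟩ := Filter.nonempty_of_mem (Filter.inter_mem h2 hPmem)
      obtain ⟨q, rfl, hq⟩ := hw1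
      have hwp : f (Sum.inr q) = p := hw2
      have hinU : Sum.inr q ∈ f ⁻¹' U := by
        show f (Sum.inr q) ∈ U
        rw [hwp]
        exact hpU
      have h3 : Sum.inl ⁻¹' (f ⁻¹' U) ∈ q.1.val := (kOpen_def.mp (hpre hUo)).2 q hinU
      obtain ⟨y, hy1, hy2⟩ := q.1.2.1.1.nonempty_mem _ (q.1.2.1.1.inter_mem _ h3 _ hq)
      have : e y ∈ U ∩ V := ⟨by rw [← hfx y]; exact hy1, by rw [← hfx y]; exact hy2⟩
      rw [hUV] at this
      exact this
    · -- convergence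
      have hσ : σ = TopologicalSpace.generateFrom
          {S | ∃ U : Set (nKatetov X n), IsOpen U ∧ S = oSet (Set.range (Sum.inl : X → nKatetov X n)) U} := rfl
      rw [hσ]
      refine le_of_le_of_eq ?_ TopologicalSpace.nhds_generateFrom.symm
      refine le_iInf₂ fun s hs => ?_
      obtain ⟨hqs, W, hWo, rfl⟩ := hs
      refine Filter.le_principal_iff.mpr ?_
      obtain ⟨V, hVo, hqV, htr⟩ := hqs
      have h1 : Sum.inl ⁻¹' V ∈ 𝒰 :=
        (kOpen_def.mp hVo).2 ⟨⟨𝒰, h𝒰ult, hcard𝒰⟩, ⟨0, hidx⟩⟩ hqV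
      have h2 : Sum.inl ⁻¹' V = Sum.inl ⁻¹' W := by
        ext y
        have h3 := Set.ext_iff.mp htr (Sum.inl y)
        simp only [Set.mem_inter_iff, Set.mem_range, Set.mem_preimage] at h3 ⊢
        constructor
        · intro h
          exact (h3.mp ⟨h, y, rfl⟩).1
        · intro h
          exact (h3.mpr ⟨h, y, rfl⟩).1
      rw [h2] at h1
      exact Filter.mem_of_superset h1.2 (hok_oSet hWo)
  -- partition
  have hpart : (Set.range (Sum.inl : X → nKatetov X n))ᶜ =
      ⋃ p ∈ (Set.range e)ᶜ, f ⁻¹' {p} := by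
    ext z
    simp only [Set.mem_compl_iff, Set.mem_iUnion, Set.mem_preimage,
      Set.mem_singleton_iff, exists_prop]
    refine Iff.trans ?_ Set.mem_iUnion₂.symm
    constructor
    · intro hz
      cases z with
      | inl x => exact absurd ⟨x, rfl⟩ hz
      | inr q => exact ⟨f (Sum.inr q), hkey q, rfl⟩
    · rintro ⟨p, hp, hfz⟩ ⟨x, rfl⟩
      exact hp ⟨x, (hfx x).symm.trans hfz⟩
  refine ⟨fun p hp => ⟨hclosed p hp, hcpt p hp, hfs p, ?_⟩, hpart, ?_, ?_⟩
  · -- subset of complement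
    intro z hz
    obtain ⟨q, rfl⟩ := hinr hp hz
    rintro ⟨x, hx⟩
    exact absurd hx (by simp)
  · -- Hausdorff partition
    intro p q hp hq hpq
    obtain ⟨U, V, hUo, hVo, hpU, hqV, hUV⟩ := hZH p hp q (Ne.symm hpq)
    exact ⟨oSet (Set.range (Sum.inl : X → nKatetov X n)) (f ⁻¹' U), oSet (Set.range (Sum.inl : X → nKatetov X n)) (f ⁻¹' V),
      oSet_isOpen_strict _ (hpre hUo), oSet_isOpen_strict _ (hpre hVo),
      hsubO hUo hpU, hsubO hVo hqV, hdisj hUV⟩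
  · -- separation from points of X
    intro p hp x
    obtain ⟨U, V, hUo, hVo, hpU, hxV, hUV⟩ := hZH p hp (e x) (fun h => hp ⟨x, h⟩)
    exact ⟨oSet (Set.range (Sum.inl : X → nKatetov X n)) (f ⁻¹' U), oSet (Set.range (Sum.inl : X → nKatetov X n)) (f ⁻¹' V),
      oSet_isOpen_strict _ (hpre hUo), oSet_isOpen_strict _ (hpre hVo),
      hsubO hUo hpU,
      mem_oSet_self (hpre hVo) (show f (Sum.inl x) ∈ V by rw [hfx x]; exact hxV),
      hdisj hUV⟩
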